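/- Let λ ∈ (0,1) and C = (1-λ)^{-1} M for some M ≥ 0. Suppose F : I → ℝ is differentiable with |F'(y)| ≤ C for all y in an interval I, and G(y) = a(F(b⁻¹(y)), b⁻¹(y)) where b : I → J is a differentiable bijection with differentiable inverse, a : ℝ² → ℝ is differentiable, and for all (x,y) one has |∂ₓa(x,y)| ≤ λ|b'(y)| and |∂ᵧa(x,y)| ≤ M|b'(y)| with b'(y) ≠ 0. Then |G'(y)| ≤ C for all y ∈ b(I). -/

import Mathlib

/-- Skew-product maps with domination transform vertical graphs of distortion ≤ C
into vertical graphs of distortion ≤ C, where C = (1-λ)⁻¹ M. -/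
theorem stmt_0 (lam C M : ℝ) (hlam0 : 0 < lam) (hlam1 : lam < 1) (hM : 0 ≤ M)
    (hC : C = (1 - lam)⁻¹ * M)
    (I : Set ℝ) (F F' b b' binv : ℝ → ℝ) (a : ℝ × ℝ → ℝ)
    (Da : ℝ × ℝ → (ℝ × ℝ →L[ℝ] ℝ))
    (hF : ∀ y ∈ I, HasDerivAt F (F' y) y)
    (hFC : ∀ y ∈ I, |F' y| ≤ C)
    (hb : ∀ y ∈ I, HasDerivAt b (b' y) y)
    (hb0 : ∀ y ∈ I, b' y ≠ 0)
    (hbinvmem : ∀ y ∈ b '' I, binv y ∈ I)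
    (hbinv : ∀ y ∈ b '' I, b (binv y) = y)
    (hbinvderiv : ∀ y ∈ b '' I, HasDerivAt binv (b' (binv y))⁻¹ y)
    (ha : ∀ p, HasFDerivAt a (Da p) p)
    (hax : ∀ p : ℝ × ℝ, |Da p (1, 0)| ≤ lam * |b' p.2|)
    (hay : ∀ p : ℝ × ℝ, |Da p (0, 1)| ≤ M * |b' p.2|) :
    ∀ y ∈ b '' I, |deriv (fun y => a (F (binv y), binv y)) y| ≤ C := by
  intro y hy
  set z := binv y with hz
  have hzI : z ∈ I := hbinvmem y hy
  set i : ℝ := (b' z)⁻¹ with hi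
  have hbinv' : HasDerivAt binv i y := hbinvderiv y hy
  have hFz : HasDerivAt F (F' z) z := hF z hzI
  have hFc : HasDerivAt (fun y => F (binv y)) (F' z * i) y := hFz.comp y hbinv'
  have hpair : HasDerivAt (fun y => (F (binv y), binv y)) (F' z * i, i) y :=
    hFc.prodMk hbinv'
  set p : ℝ × ℝ := (F z, z) with hp
  have hcomp : HasDerivAt (fun y => a (F (binv y), binv y)) (Da p (F' z * i, i)) y :=
    (ha p).comp_hasDerivAt y hpair
  rw [hcomp.deriv]
  have hsplit : ((F' z * i, i) : ℝ × ℝ) = (F' z * i) • (1, 0) + i • (0, 1) := by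
    simp [Prod.ext_iff]
  have : Da p (F' z * i, i) = (F' z * i) * Da p (1, 0) + i * Da p (0, 1) := by
    rw [hsplit, map_add, map_smul, map_smul]; rfl
  rw [this]
  have hb0z : b' z ≠ 0 := hb0 z hzI
  have habs : |b' z| ≠ 0 := abs_ne_zero.mpr hb0z
  have hp2 : p.2 = z := rfl
  have habsi : |i| = |b' z|⁻¹ := by rw [hi, abs_inv]
  have hC0 : 0 ≤ C := by rw [hC]; have : (0:ℝ) < 1 - lam := by linarith
                         positivity
  have h1 : |(F' z * i) * Da p (1, 0)| ≤ C * lam := by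
    rw [abs_mul, abs_mul]
    calc |F' z| * |i| * |Da p (1, 0)| ≤ C * |i| * (lam * |b' z|) := by
          apply mul_le_mul _ _ (abs_nonneg _) (by positivity)
          · exact mul_le_mul_of_nonneg_right (hFC z hzI) (abs_nonneg _)
          · simpa [hp2] using hax p
      _ = C * lam := by
          rw [habsi]; field_simp
  have h2 : |i * Da p (0, 1)| ≤ M := by
    rw [abs_mul]
    calc |i| * |Da p (0, 1)| ≤ |i| * (M * |b' z|) := by
          apply mul_le_mul_of_nonneg_left _ (abs_nonneg _)
          simpa [hp2] using hay p
      _ = M := by rw [habsi]; field_simp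
  calc |(F' z * i) * Da p (1, 0) + i * Da p (0, 1)|
      ≤ |(F' z * i) * Da p (1, 0)| + |i * Da p (0, 1)| := abs_add_le _ _
    _ ≤ C * lam + M := add_le_add h1 h2
    _ ≤ C := by
        have h1l : (0:ℝ) < 1 - lam := by linarith
        rw [hC]
        nlinarith [inv_mul_cancel₀ (ne_of_gt h1l), inv_pos.mpr h1l]
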